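/- arXiv:1810.02149 — 8 statements merged into one kernel-verified Lean document; each statement's English description precedes it below -/
import Mathlib

section
/- Let C, C' and C'' be filtered objects in a category 𝒞, let α be a translation function, and let G : C → C' and G' : C' → C'' be morphisms of filtered objects. Suppose that G'(t) : C'(t) → C''(t) is a monomorphism for every t ∈ [0,∞] and that the composition G'∘G : C → C'' is an α-interleaving. Then G' : C' → C'' is an α-interleaving. -/
open CategoryTheory
open scoped ENNReal

/-- A morphism `G : C ⟶ C'` of filtered objects (functors from `[0,∞]`,
with its usual order, to `𝒞`) is an `α`-interleaving if for every `t` there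
is `F_t : C'(t) ⟶ C(α t)` with `F_t ∘ G(t)` and `G(α t) ∘ F_t` equal to the
respective `α`-units. -/
def IsInterleaving {𝒞 : Type*} [Category 𝒞] (α : ℝ≥0∞ → ℝ≥0∞)
    (hα : ∀ t, t ≤ α t) {C C' : ℝ≥0∞ ⥤ 𝒞} (G : C ⟶ C') : Prop :=
  ∀ t : ℝ≥0∞, ∃ F : C'.obj t ⟶ C.obj (α t),
    G.app t ≫ F = C.map (homOfLE (hα t)) ∧
    F ≫ G.app (α t) = C'.map (homOfLE (hα t))

/-- if `G'` is pointwise a monomorphism and `G ≫ G'` is an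
`α`-interleaving, then `G'` is an `α`-interleaving. -/
theorem isInterleaving_of_comp_mono {𝒞 : Type*} [Category 𝒞]
    (α : ℝ≥0∞ → ℝ≥0∞) (hmono : Monotone α) (hα : ∀ t, t ≤ α t)
    {C C' C'' : ℝ≥0∞ ⥤ 𝒞} (G : C ⟶ C') (G' : C' ⟶ C'')
    (hG' : ∀ t : ℝ≥0∞, Mono (G'.app t))
    (h : IsInterleaving α hα (G ≫ G')) :
    IsInterleaving α hα G' := by
  intro t
  obtain ⟨F, h1, h2⟩ := h t
  refine ⟨F ≫ G.app (α t), ?_, ?_⟩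
  · haveI := hG' (α t)
    rw [← cancel_mono (G'.app (α t))]
    have := G'.naturality (homOfLE (hα t))
    simp only [Category.assoc]
    rw [← NatTrans.comp_app G G' (α t), h2, ← this]
  · rw [Category.assoc, ← NatTrans.comp_app G G' (α t), h2]
end

section
/- Let Λ : L × W → [0,∞] be a dissimilarity, let α be a translation function, let T : L → [0,∞] be an α-truncation function for Λ, and let Γ be the T-truncation of Λ. Then for every t ∈ [0,∞] there exists a function f : L → L such that: (1) for every finite σ ⊆ L with σ ∈ NΛ_t, the image f(σ) belongs to NΓ_{α(t)} and the union σ ∪ f(σ) belongs to NΛ_{α(t)}; and (2) for every finite σ ⊆ L with σ ∈ NΓ_t, the union σ ∪ f(σ) belongs to NΓ_{α(t)}. -/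
open scoped ENNReal

/-- `σ` is a simplex of the Dowker nerve of `Λ` in filtration degree `t`. -/
def InNerve {L W : Type*} (Λ : L → W → ℝ≥0∞) (t : ℝ≥0∞) (σ : Finset L) : Prop :=
  ∃ w, ∀ l ∈ σ, Λ l w < t

/-- `T` is an `α`-truncation function for `Λ`. -/
def IsTruncation {L W : Type*} (Λ : L → W → ℝ≥0∞) (α : ℝ≥0∞ → ℝ≥0∞)
    (T : L → ℝ≥0∞) : Prop :=
  ∀ (t : ℝ≥0∞) (l : L), ∃ l', ∀ w, Λ l w < t → Λ l' w < α t ∧ Λ l' w < T l'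

/-- The `T`-truncation `Γ` of `Λ`. -/
noncomputable def truncation {L W : Type*} (Λ : L → W → ℝ≥0∞) (T : L → ℝ≥0∞) :
    L → W → ℝ≥0∞ :=
  fun l w => if Λ l w < T l then Λ l w else ⊤

/-- for every `t` there is a function `f : L → L` such that
(1) every simplex `σ` of `NΛ_t` has `f(σ) ∈ NΓ_{α t}` and
`σ ∪ f(σ) ∈ NΛ_{α t}`, and (2) every simplex `σ` of `NΓ_t` has
`σ ∪ f(σ) ∈ NΓ_{α t}`, where `Γ` is the `T`-truncation of `Λ`. -/
theorem truncation_interleaving {L W : Type*} [DecidableEq L]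
    (Λ : L → W → ℝ≥0∞) (α : ℝ≥0∞ → ℝ≥0∞) (hmono : Monotone α)
    (hα : ∀ t, t ≤ α t) (T : L → ℝ≥0∞) (hT : IsTruncation Λ α T)
    (t : ℝ≥0∞) :
    ∃ f : L → L,
      (∀ σ : Finset L, InNerve Λ t σ →
        InNerve (truncation Λ T) (α t) (σ.image f) ∧
          InNerve Λ (α t) (σ ∪ σ.image f)) ∧
      (∀ σ : Finset L, InNerve (truncation Λ T) t σ →
        InNerve (truncation Λ T) (α t) (σ ∪ σ.image f)) := by
  choose f hf using hT t
  refine ⟨f, ?_, ?_⟩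
  · intro σ ⟨w, hw⟩
    constructor
    · refine ⟨w, fun l hl => ?_⟩
      obtain ⟨l₀, hl₀, rfl⟩ := Finset.mem_image.mp hl
      obtain ⟨h1, h2⟩ := hf l₀ w (hw l₀ hl₀)
      simp [truncation, h2, h1]
    · refine ⟨w, fun l hl => ?_⟩
      rcases Finset.mem_union.mp hl with h | h
      · exact lt_of_lt_of_le (hw l h) (hα t)
      · obtain ⟨l₀, hl₀, rfl⟩ := Finset.mem_image.mp h
        exact (hf l₀ w (hw l₀ hl₀)).1
  · intro σ ⟨w, hw⟩
    refine ⟨w, fun l hl => ?_⟩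
    rcases Finset.mem_union.mp hl with h | h
    · exact lt_of_lt_of_le (hw l h) (hα t)
    · obtain ⟨l₀, hl₀, rfl⟩ := Finset.mem_image.mp h
      have hΛ : Λ l₀ w < t := by
        have := hw l₀ hl₀
        unfold truncation at this
        by_cases hc : Λ l₀ w < T l₀
        · simpa [hc] using this
        · simp [hc] at this
      obtain ⟨h1, h2⟩ := hf l₀ w hΛ
      simp [truncation, h2, h1]
end

section
/- Let Λ : L × W → [0,∞] be a dissimilarity with L finite, let α be a translation function, and let < be a total order on L with minimal element l_0. Then the α-insertion radius λ^α : L → [0,∞] is an α-truncation function for Λ: for all t ∈ [0,∞] and all l ∈ L there exists l' ∈ L so that for all w ∈ W with Λ(l,w) < t one has Λ(l',w) < α(t) and Λ(l',w) < λ^α(l'). -/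
open scoped ENNReal Classical

/-- The cover dissimilarity `Λ^α : L × L → [0,∞]` for `Λ` with respect to
the translation function `α` and the base point `l₀`. -/
noncomputable def coverDiss {L W : Type*} (Λ : L → W → ℝ≥0∞)
    (α : ℝ≥0∞ → ℝ≥0∞) (l₀ : L) (l' l : L) : ℝ≥0∞ :=
  if l = l' then 0
  else if l' = l₀ then ⊤
  else sSup ({x | ∃ w, α (Λ l w) ≤ Λ l' w ∧ x = Λ l' w} ∪ {0})

/-- The `α`-insertion radius `λ^α` of `l ∈ L` with respect to a total order
on `L` with minimal element `l₀`. -/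
noncomputable def insertionRadius {L W : Type*} [LinearOrder L]
    (Λ : L → W → ℝ≥0∞) (α : ℝ≥0∞ → ℝ≥0∞) (l₀ : L) (l : L) : ℝ≥0∞ :=
  if l = l₀ then ⊤
  else ⨆ k, ⨆ (_ : l ≤ k), ⨅ l', ⨅ (_ : l' < l), coverDiss Λ α l₀ l' k

/-- for `L` finite, the `α`-insertion radius `λ^α` is an
`α`-truncation function for `Λ`. -/
theorem insertionRadius_isTruncation {L W : Type*} [Fintype L] [LinearOrder L]
    (Λ : L → W → ℝ≥0∞) (α : ℝ≥0∞ → ℝ≥0∞) (hmono : Monotone α)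
    (hα : ∀ t, t ≤ α t) (l₀ : L) (hl₀ : ∀ l, l₀ ≤ l)
    (t : ℝ≥0∞) (l : L) :
    ∃ l', ∀ w, Λ l w < t →
      Λ l' w < α t ∧ Λ l' w < insertionRadius Λ α l₀ l' := by
  classical
  set P : L → Prop := fun l' => ∀ w, Λ l w < t → Λ l' w < α t with hPdef
  have hl : P l := fun w hw => lt_of_lt_of_le hw (hα t)
  set S : Finset L := Finset.univ.filter P with hSdef
  have hlS : l ∈ S := Finset.mem_filter.mpr ⟨Finset.mem_univ _, hl⟩
  have hS : S.Nonempty := ⟨l, hlS⟩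
  set l' := S.min' hS with hl'def
  have hPl' : P l' := (Finset.mem_filter.mp (S.min'_mem hS)).2
  refine ⟨l', fun w hw => ⟨hPl' w hw, ?_⟩⟩
  have hlt_top : Λ l' w < ⊤ := lt_of_lt_of_le (hPl' w hw) le_top
  by_cases h0 : l' = l₀
  · rw [insertionRadius, if_pos h0]; exact hlt_top
  · rw [insertionRadius, if_neg h0]
    have hl'le : l' ≤ l := S.min'_le l hlS
    have key : ∀ l'', l'' < l' → α t ≤ coverDiss Λ α l₀ l'' l := by
      intro l'' hl''
      have hnP : ¬ P l'' := by
        intro h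
        exact absurd (S.min'_le l'' (Finset.mem_filter.mpr ⟨Finset.mem_univ _, h⟩)) (not_le.mpr hl'')
      simp only [hPdef, not_forall, not_lt, exists_prop] at hnP
      obtain ⟨w₀, hw₀, hge⟩ := hnP
      have hll'' : l ≠ l'' := by
        rintro rfl; exact lt_irrefl l (lt_of_lt_of_le hl'' hl'le)
      rw [coverDiss, if_neg hll'']
      by_cases h0'' : l'' = l₀
      · rw [if_pos h0'']; exact le_top
      · rw [if_neg h0'']
        refine le_trans hge (le_sSup ?_)
        exact Or.inl ⟨w₀, le_trans (hmono hw₀.le) hge, rfl⟩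
    have hinf : α t ≤ ⨅ l'', ⨅ (_ : l'' < l'), coverDiss Λ α l₀ l'' l :=
      le_iInf fun l'' => le_iInf fun h => key l'' h
    calc Λ l' w < α t := hPl' w hw
      _ ≤ ⨅ l'', ⨅ (_ : l'' < l'), coverDiss Λ α l₀ l'' l := hinf
      _ ≤ ⨆ k, ⨆ (_ : l' ≤ k), ⨅ l'', ⨅ (_ : l'' < l'), coverDiss Λ α l₀ l'' k :=
        le_iSup_of_le l (le_iSup_of_le hl'le le_rfl)
end

section
/- Let Λ : L × W → [0,∞] be a dissimilarity with L finite and let φ : L → L be a parent function. Then the (Λ,φ)-restriction R(Λ,φ) : L → [0,∞] is a restriction function for Λ relative to φ: (1) for all (l,w) ∈ L × W with Λ(l,w) < Λ(φ(l),w) one has Λ(φ(l),w) ≤ R(Λ,φ)(l); (2) R(Λ,φ)(φ(l)) ≥ R(Λ,φ)(l) for every l ∈ L; and (3) if φ(l) = l then R(Λ,φ)(l) = ∞. -/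
open scoped ENNReal Classical

/-- `φ : L → L` is a parent function: `φⁿ(l) = l` for some `n > 0` implies
`φ(l) = l`. -/
def IsParent {L : Type*} (φ : L → L) : Prop :=
  ∀ (l : L) (n : ℕ), 0 < n → φ^[n] l = l → φ l = l

/-- `ρ(l,l') = sup P(l,l')` if `P(l,l') = { Λ(l',w) : Λ(l,w) < Λ(l',w) }` is
nonempty and `0` otherwise. -/
noncomputable def rho {L W : Type*} (Λ : L → W → ℝ≥0∞) (l l' : L) : ℝ≥0∞ :=
  if {x | ∃ w, Λ l w < Λ l' w ∧ x = Λ l' w}.Nonempty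
  then sSup {x | ∃ w, Λ l w < Λ l' w ∧ x = Λ l' w}
  else 0

/-- The auxiliary function `R'` of the `(Λ,φ)`-restriction. -/
noncomputable def Raux {L W : Type*} (Λ : L → W → ℝ≥0∞) (φ : L → L) (l : L) :
    ℝ≥0∞ :=
  if φ l = l then ⊤ else rho Λ l (φ l)

/-- The `(Λ,φ)`-restriction: the maximum of `R'` over the descendants of `l`. -/
noncomputable def canonicalRestriction {L W : Type*} (Λ : L → W → ℝ≥0∞)
    (φ : L → L) (l : L) : ℝ≥0∞ :=
  ⨆ (l' : L) (_ : ∃ m : ℕ, φ^[m] l' = l), Raux Λ φ l'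

/-- `R` is a restriction function for `Λ` relative to `φ`. -/
def IsRestriction {L W : Type*} (Λ : L → W → ℝ≥0∞) (φ : L → L)
    (R : L → ℝ≥0∞) : Prop :=
  (∀ (l : L) (w : W), Λ l w < Λ (φ l) w → Λ (φ l) w ≤ R l) ∧
  (∀ l : L, R l ≤ R (φ l)) ∧
  (∀ l : L, φ l = l → R l = ⊤)

/-- for `L` finite and `φ` a parent function, the
`(Λ,φ)`-restriction is a restriction function for `Λ` relative to `φ`. -/
theorem canonicalRestriction_isRestriction {L W : Type*} [Fintype L]
    (Λ : L → W → ℝ≥0∞) (φ : L → L) (hφ : IsParent φ) :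
    IsRestriction Λ φ (canonicalRestriction Λ φ) := by
  refine ⟨?_, ?_, ?_⟩
  · intro l w hw
    have h1 : Raux Λ φ l ≤ canonicalRestriction Λ φ l := by
      refine le_iSup₂_of_le l ⟨0, rfl⟩ le_rfl
    refine le_trans ?_ h1
    by_cases h : φ l = l
    · simp [Raux, h]
    · rw [Raux, if_neg h, rho, if_pos ⟨Λ (φ l) w, w, hw, rfl⟩]
      exact le_sSup ⟨w, hw, rfl⟩
  · intro l
    refine iSup₂_le fun l' ⟨m, hm⟩ => ?_
    refine le_iSup₂_of_le l' ⟨m + 1, ?_⟩ le_rfl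
    rw [Function.iterate_succ_apply', hm]
  · intro l hl
    refine top_unique ?_
    refine le_iSup₂_of_le l ⟨0, rfl⟩ ?_
    simp [Raux, hl]
end

section
/- Let Λ : L × W → [0,∞] be a dissimilarity with L finite and let φ : L → L be a parent function. Then the (Λ,φ)-restriction R(Λ,φ) is the minimal restriction function for Λ relative to φ: if R is any restriction function for Λ relative to φ, then R(Λ,φ)(l) ≤ R(l) for every l ∈ L. -/
open scoped ENNReal Classical

/-- for `L` finite and `φ` a parent function, the
`(Λ,φ)`-restriction is the minimal restriction function for `Λ` relative
to `φ`. -/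
theorem canonicalRestriction_minimal {L W : Type*} [Fintype L]
    (Λ : L → W → ℝ≥0∞) (φ : L → L) (hφ : IsParent φ)
    (R : L → ℝ≥0∞) (hR : IsRestriction Λ φ R) :
    ∀ l : L, canonicalRestriction Λ φ l ≤ R l := by
  intro l
  refine iSup₂_le fun l' hm => ?_
  obtain ⟨m, hm⟩ := hm
  have hmono : R l' ≤ R l := by
    subst hm
    induction m with
    | zero => simp
    | succ n ih =>
      rw [Function.iterate_succ_apply']
      exact le_trans ih (hR.2.1 _)
  refine le_trans ?_ hmono
  unfold Raux
  split_ifs with h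
  · rw [hR.2.2 l' h]
  · unfold rho
    split_ifs with h2
    · exact sSup_le fun x ⟨w, hw, hx⟩ => hx ▸ hR.1 l' w hw
    · simp
end

section
/- Let Λ : L × W → [0,∞] be a dissimilarity, let φ : L → L be a parent function, and let R be a restriction function for Λ relative to φ. Let t ∈ [0,∞], let l_n ∈ L satisfy R(l_n) < t, and define f : L → L by f(l_n) = φ(l_n) and f(l) = l for l ≠ l_n. Then for every finite σ ⊆ L and every w ∈ W with Λ(l,w) < t for all l ∈ σ, one has Λ(l,w) < t for all l ∈ σ ∪ f(σ); in particular σ ∈ NΛ_t implies σ ∪ f(σ) ∈ NΛ_t. -/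
open scoped ENNReal Classical

/-- with `f` sending `lₙ` to `φ(lₙ)` and fixing everything
else, if `R(lₙ) < t` then any witness `w` for `σ ∈ NΛ_t` also witnesses
`σ ∪ f(σ) ∈ NΛ_t`; in particular `σ ∈ NΛ_t` implies `σ ∪ f(σ) ∈ NΛ_t`. -/
theorem union_image_mem_nerve {L W : Type*} (Λ : L → W → ℝ≥0∞)
    (φ : L → L) (hφ : IsParent φ) (R : L → ℝ≥0∞)
    (hR : IsRestriction Λ φ R) (t : ℝ≥0∞) (lₙ : L) (hlₙ : R lₙ < t)
    (f : L → L) (hf : f = fun l => if l = lₙ then φ lₙ else l) :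
    (∀ (σ : Finset L) (w : W), (∀ l ∈ σ, Λ l w < t) →
      ∀ l ∈ σ ∪ σ.image f, Λ l w < t) ∧
    (∀ σ : Finset L, InNerve Λ t σ → InNerve Λ t (σ ∪ σ.image f)) := by
  have key : ∀ (σ : Finset L) (w : W), (∀ l ∈ σ, Λ l w < t) →
      ∀ l ∈ σ ∪ σ.image f, Λ l w < t := by
    intro σ w hw l hl
    rcases Finset.mem_union.1 hl with h | h
    · exact hw l h
    · rcases Finset.mem_image.1 h with ⟨a, ha, rfl⟩
      subst hf
      by_cases hla : a = lₙ
      · subst hla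
        simp only [if_pos rfl]
        rcases lt_or_ge (Λ a w) (Λ (φ a) w) with hlt | hle
        · exact lt_of_le_of_lt (hR.1 a w hlt) hlₙ
        · exact lt_of_le_of_lt hle (hw a ha)
      · simpa [hla] using hw a ha
  exact ⟨key, fun σ ⟨w, hw⟩ => ⟨w, key σ w hw⟩⟩
end

section
/- Let Λ : L × W → [0,∞] be a dissimilarity, let φ : L → L be a parent function, and let R be a restriction function for Λ relative to φ. Let t ∈ [0,∞], and let l_n ∈ L satisfy R(l_n) < t and R(l_n) ≤ R(l) for all l ∈ L. Define f : L → L by f(l_n) = φ(l_n) and f(l) = l for l ≠ l_n. Then for every finite σ ⊆ L with σ ∈ N(Λ,R,φ)(t), the union σ ∪ f(σ) also belongs to N(Λ,R,φ)(t). -/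
open scoped ENNReal Classical

/-- `l` is a slope point: `R(l) < R(l')` for every `l' ∈ φ⁻¹(l)`. -/
def IsSlopePoint {L : Type*} (R : L → ℝ≥0∞) (φ : L → L) (l : L) : Prop :=
  ∀ l', φ l' = l → R l < R l'

/-- `σ` is a simplex of the `(R,φ)`-nerve `N(Λ,R,φ)(t)`. -/
def InSparseNerve {L W : Type*} (Λ : L → W → ℝ≥0∞) (R : L → ℝ≥0∞)
    (φ : L → L) (t : ℝ≥0∞) (σ : Finset L) : Prop :=
  InNerve Λ t σ ∧
    ∃ w, (∀ l ∈ σ, Λ l w < t) ∧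
      (∀ l ∈ σ, ∀ l' ∈ σ, Λ l w ≤ R l') ∧
      (∀ l ∈ σ, IsSlopePoint R φ l → Λ l w < R l)

/-- if `R(lₙ) < t` and `R(lₙ) ≤ R(l)` for all `l`, and `f`
sends `lₙ` to `φ(lₙ)` fixing everything else, then `σ ∈ N(Λ,R,φ)(t)`
implies `σ ∪ f(σ) ∈ N(Λ,R,φ)(t)`. -/
theorem union_image_mem_sparseNerve {L W : Type*} (Λ : L → W → ℝ≥0∞)
    (φ : L → L) (hφ : IsParent φ) (R : L → ℝ≥0∞)
    (hR : IsRestriction Λ φ R) (t : ℝ≥0∞) (lₙ : L)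
    (hlₙ : R lₙ < t) (hmin : ∀ l : L, R lₙ ≤ R l)
    (f : L → L) (hf : f = fun l => if l = lₙ then φ lₙ else l) :
    ∀ σ : Finset L, InSparseNerve Λ R φ t σ →
      InSparseNerve Λ R φ t (σ ∪ σ.image f) := by
  intro σ ⟨_, w, h1, h2, h3⟩
  -- membership characterization
  have hmem : ∀ x ∈ σ ∪ σ.image f, x ∈ σ ∨ (lₙ ∈ σ ∧ x = φ lₙ) := by
    intro x hx
    rcases Finset.mem_union.1 hx with hx | hx
    · exact Or.inl hx
    · rcases Finset.mem_image.1 hx with ⟨a, ha, rfl⟩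
      subst hf
      by_cases h : a = lₙ
      · subst h; simp only [if_pos rfl]; exact Or.inr ⟨ha, rfl⟩
      · simp only [if_neg h]; exact Or.inl ha
  -- key estimate when lₙ ∈ σ
  have hA : lₙ ∈ σ → Λ (φ lₙ) w ≤ R lₙ := by
    intro hn
    by_cases h : Λ lₙ w < Λ (φ lₙ) w
    · exact hR.1 lₙ w h
    · exact (not_lt.1 h).trans (h2 lₙ hn lₙ hn)
  have hRφ : R lₙ ≤ R (φ lₙ) := hR.2.1 lₙ
  have hns : ¬ IsSlopePoint R φ (φ lₙ) := fun hs => absurd hRφ (not_le.2 (hs lₙ rfl))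
  -- bounds at any point of the union
  have hlt : ∀ x ∈ σ ∪ σ.image f, Λ x w < t := by
    intro x hx
    rcases hmem x hx with hx | ⟨hn, rfl⟩
    · exact h1 x hx
    · exact (hA hn).trans_lt hlₙ
  refine ⟨⟨w, hlt⟩, w, hlt, ?_, ?_⟩
  · intro l hl l' hl'
    rcases hmem l hl with hlσ | ⟨hn, rfl⟩
    · rcases hmem l' hl' with hl'σ | ⟨hn, rfl⟩
      · exact h2 l hlσ l' hl'σ
      · exact (h2 l hlσ lₙ hn).trans hRφ
    · exact (hA hn).trans (hmin l')
  · intro l hl hs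
    rcases hmem l hl with hlσ | ⟨hn, rfl⟩
    · exact h3 l hlσ hs
    · exact absurd hs hns
end

section
/- Let Λ : L × W → [0,∞] be a dissimilarity, let α be a translation function, let T : L → [0,∞] be an α-truncation function for Λ, and let Γ be the T-truncation of Λ. Then for every t ∈ [0,∞], the Dowker nerve of Γ is contained in the Dowker nerve of Λ, i.e. NΓ_t ⊆ NΛ_t, and moreover for every finite σ ∈ NΛ_t there exists τ ∈ NΓ_{α(t)} with σ ∪ τ ∈ NΛ_{α(t)}; in particular the map NΛ_t → NΛ_{α(t)} factors up to the witness τ through NΓ_{α(t)}, where τ can be taken to be f(σ) for a single function f : L → L satisfying: for all l ∈ L and w ∈ W with Λ(l,w) < t, both Λ(f(l),w) < α(t) and Λ(f(l),w) < T(f(l)) hold. -/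
open scoped ENNReal Classical

/-- `NΓ_t ⊆ NΛ_t`, and there is a single function `f : L → L`
such that for all `l, w` with `Λ(l,w) < t` both `Λ(f(l),w) < α(t)` and
`Λ(f(l),w) < T(f(l))`, and such that every `σ ∈ NΛ_t` has
`f(σ) ∈ NΓ_{α(t)}` and `σ ∪ f(σ) ∈ NΛ_{α(t)}`, where `Γ` is the
`T`-truncation of `Λ`. -/
theorem nerve_truncation_subset_and_factor {L W : Type*} (Λ : L → W → ℝ≥0∞)
    (α : ℝ≥0∞ → ℝ≥0∞) (hmono : Monotone α) (hα : ∀ t, t ≤ α t)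
    (T : L → ℝ≥0∞) (hT : IsTruncation Λ α T) (t : ℝ≥0∞) :
    (∀ σ : Finset L, InNerve (truncation Λ T) t σ → InNerve Λ t σ) ∧
    ∃ f : L → L,
      (∀ (l : L) (w : W), Λ l w < t →
        Λ (f l) w < α t ∧ Λ (f l) w < T (f l)) ∧
      (∀ σ : Finset L, InNerve Λ t σ →
        InNerve (truncation Λ T) (α t) (σ.image f) ∧
          InNerve Λ (α t) (σ ∪ σ.image f)) := by
  constructor
  · rintro σ ⟨w, hw⟩
    refine ⟨w, fun l hl => ?_⟩
    have h := hw l hl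
    unfold truncation at h
    split at h
    · exact h
    · exact absurd h (by simp)
  · refine ⟨fun l => Classical.choose (hT t l), fun l w hlw =>
      Classical.choose_spec (hT t l) w hlw, ?_⟩
    rintro σ ⟨w, hw⟩
    constructor
    · refine ⟨w, fun l' hl' => ?_⟩
      obtain ⟨l, hl, rfl⟩ := Finset.mem_image.mp hl'
      obtain ⟨h1, h2⟩ := Classical.choose_spec (hT t l) w (hw l hl)
      simpa [truncation, h2] using h1
    · refine ⟨w, fun l hl => ?_⟩
      rcases Finset.mem_union.mp hl with h | h
      · exact lt_of_lt_of_le (hw l h) (hα t)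
      · obtain ⟨l0, hl0, rfl⟩ := Finset.mem_image.mp h
        exact (Classical.choose_spec (hT t l0) w (hw l0 hl0)).1
end
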